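/- Let (h, [·,·], *) be a right Post-Lie algebra over a field K of characteristic zero, and let * also denote its unique extension to the universal enveloping algebra U(h) (satisfying: ε(f*g) = ε(f)ε(g); Δ(f*g) = Δ(f)*Δ(g) componentwise; f*1 = f; 1*f = ε(f)·1; f*(g·y) = (f*g)*y − f*(g*y) for y ∈ h; (f·g)*h = (f*h⁽¹⁾)·(g*h⁽²⁾); (f*g)*h = f*((g*h⁽¹⁾)·h⁽²⁾)). Then (U(h), *) is a right Post-Hopf algebra; in particular the right multiplication map γ : U(h) → End_K(U(h)), γ(z)(y) = y * z, is convolution invertible: there exists a linear β : U(h) → End_K(U(h)) with γ(x⁽¹⁾) ∘ β(x⁽²⁾) = β(x⁽¹⁾) ∘ γ(x⁽²⁾) = ε(x)·id for all x ∈ U(h). -/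

import Mathlib

open TensorProduct

namespace St10

variable {K L : Type*} [Field K] [LieRing L] [LieAlgebra K L]

local notation "H" => UniversalEnvelopingAlgebra K L
local notation "ιU" => UniversalEnvelopingAlgebra.ι K

noncomputable def VV : Submodule K H :=
  Submodule.span K (insert 1 (Set.range fun z : L => ιU z))

local notation "V" => VV (K := K) (L := L)

lemma one_mem_VV : (1 : H) ∈ V :=
  Submodule.subset_span (Set.mem_insert _ _)

lemma ι_mem_VV (z : L) : ιU z ∈ V :=
  Submodule.subset_span (Set.mem_insert_of_mem _ ⟨z, rfl⟩)

lemma one_mem_one : (1 : H) ∈ (1 : Submodule K H) := by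
  rw [Submodule.one_eq_span]
  exact Submodule.mem_span_singleton_self 1

lemma VV_pow_le_succ (k : ℕ) : V ^ k ≤ V ^ (k + 1) := by
  intro x hx
  have h := Submodule.mul_mem_mul hx (one_mem_VV (K := K) (L := L))
  rwa [mul_one, ← pow_succ] at h

lemma VV_pow_mono {a b : ℕ} (h : a ≤ b) : V ^ a ≤ V ^ b := by
  induction b, h using Nat.le_induction with
  | base => exact le_rfl
  | succ b hb ih => exact ih.trans (VV_pow_le_succ b)

lemma one_mem_VV_pow (k : ℕ) : (1 : H) ∈ V ^ k :=
  VV_pow_mono (Nat.zero_le k) (by simpa using one_mem_one (K := K) (L := L))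

lemma exists_mem_VV_pow (x : H) : ∃ k, x ∈ V ^ k := by
  obtain ⟨t, rfl⟩ : ∃ t, UniversalEnvelopingAlgebra.mkAlgHom K L t = x :=
    RingCon.mkₐ_surjective _ x
  induction t using TensorAlgebra.induction with
  | algebraMap r =>
      exact ⟨0, by rw [AlgHom.commutes, pow_zero]; exact Submodule.algebraMap_mem r⟩
  | ι z =>
      refine ⟨1, ?_⟩
      rw [pow_one]
      have : (UniversalEnvelopingAlgebra.mkAlgHom K L)
          (TensorAlgebra.ι K z) = ιU z := by
        rw [UniversalEnvelopingAlgebra.ι_apply]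
      rw [this]; exact ι_mem_VV z
  | mul a b ha hb =>
      obtain ⟨i, hi⟩ := ha; obtain ⟨j, hj⟩ := hb
      exact ⟨i + j, by rw [map_mul, pow_add]; exact Submodule.mul_mem_mul hi hj⟩
  | add a b ha hb =>
      obtain ⟨i, hi⟩ := ha; obtain ⟨j, hj⟩ := hb
      refine ⟨max i j, ?_⟩
      rw [map_add]
      exact Submodule.add_mem _ (VV_pow_mono (le_max_left i j) hi)
        (VV_pow_mono (le_max_right i j) hj)


variable (Δ : (UniversalEnvelopingAlgebra K L) →ₐ[K]
    (UniversalEnvelopingAlgebra K L) ⊗[K] (UniversalEnvelopingAlgebra K L))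

/-- The reduced coproduct. -/
noncomputable def DD : H →ₗ[K] H ⊗[K] H :=
  Δ.toLinearMap - (TensorProduct.mk K H H).flip 1 - TensorProduct.mk K H H 1

lemma DD_apply (x : H) : DD Δ x = Δ x - x ⊗ₜ[K] 1 - 1 ⊗ₜ[K] x := rfl

/-- Tensor product of submodules. -/
noncomputable def WT (p q : Submodule K H) : Submodule K (H ⊗[K] H) :=
  Submodule.map₂ (TensorProduct.mk K H H) p q

lemma tmul_mem_WT {p q : Submodule K H} {a b : H} (ha : a ∈ p) (hb : b ∈ q) :
    a ⊗ₜ[K] b ∈ WT p q :=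
  Submodule.apply_mem_map₂ _ ha hb

lemma WT_mono {p p' q q' : Submodule K H} (hp : p ≤ p') (hq : q ≤ q') :
    WT p q ≤ WT p' q' :=
  Submodule.map₂_le_map₂ hp hq

lemma mulLeft_tmul_one_WT {z : H} (hz : z ∈ V) {k : ℕ} {t : H ⊗[K] H}
    (ht : t ∈ WT (V ^ k) (V ^ k)) :
    (z ⊗ₜ[K] (1 : H)) * t ∈ WT (V ^ (k + 1)) (V ^ (k + 1)) := by
  have h : WT (V ^ k) (V ^ k) ≤
      Submodule.comap (LinearMap.mulLeft K (z ⊗ₜ[K] (1 : H)))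
        (WT (V ^ (k + 1)) (V ^ (k + 1))) := by
    refine Submodule.map₂_le.mpr fun a ha b hb => ?_
    simp only [Submodule.mem_comap, LinearMap.mulLeft_apply, TensorProduct.mk_apply,
      Algebra.TensorProduct.tmul_mul_tmul, one_mul]
    refine tmul_mem_WT ?_ (VV_pow_le_succ k hb)
    rw [pow_succ']
    exact Submodule.mul_mem_mul hz ha
  exact h ht

lemma mulLeft_one_tmul_WT {z : H} (hz : z ∈ V) {k : ℕ} {t : H ⊗[K] H}
    (ht : t ∈ WT (V ^ k) (V ^ k)) :
    ((1 : H) ⊗ₜ[K] z) * t ∈ WT (V ^ (k + 1)) (V ^ (k + 1)) := by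
  have h : WT (V ^ k) (V ^ k) ≤
      Submodule.comap (LinearMap.mulLeft K ((1 : H) ⊗ₜ[K] z))
        (WT (V ^ (k + 1)) (V ^ (k + 1))) := by
    refine Submodule.map₂_le.mpr fun a ha b hb => ?_
    simp only [Submodule.mem_comap, LinearMap.mulLeft_apply, TensorProduct.mk_apply,
      Algebra.TensorProduct.tmul_mul_tmul, one_mul]
    refine tmul_mem_WT (VV_pow_le_succ k ha) ?_
    rw [pow_succ']
    exact Submodule.mul_mem_mul hz hb
  exact h ht

lemma DD_mem (hΔ : ∀ x : L, Δ (ιU x) = (ιU x) ⊗ₜ[K] (1 : H) + (1 : H) ⊗ₜ[K] (ιU x)) (k : ℕ) : ∀ x ∈ V ^ (k + 1), DD Δ x ∈ WT (V ^ k) (V ^ k) := by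
  induction k with
  | zero =>
      intro x hx
      rw [pow_one] at hx
      induction hx using Submodule.span_induction with
      | mem x h =>
          rcases h with h | ⟨z, rfl⟩
          · subst h
            have : DD Δ (1 : H) = -((1 : H) ⊗ₜ[K] (1 : H)) := by
              rw [DD_apply, map_one, Algebra.TensorProduct.one_def]
              abel
            rw [this]
            exact neg_mem (tmul_mem_WT (one_mem_one) (one_mem_one))
          · have : DD Δ (ιU z) = 0 := by
              rw [DD_apply, hΔ]; abel
            rw [this]; exact zero_mem _
      | zero => rw [map_zero]; exact zero_mem _
      | add x y hx hy ihx ihy => rw [map_add]; exact add_mem ihx ihy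
      | smul c x hx ihx => rw [map_smul]; exact Submodule.smul_mem _ _ ihx
  | succ k ih =>
      intro x hx
      rw [pow_succ'] at hx
      refine Submodule.mul_induction_on hx (fun v hv y hy => ?_)
        (fun a b hia hib => by rw [map_add]; exact add_mem hia hib)
      · induction hv using Submodule.span_induction with
          | mem v h =>
              rcases h with h | ⟨z, rfl⟩
              · subst h
                rw [one_mul]
                exact WT_mono (VV_pow_le_succ k) (VV_pow_le_succ k) (ih y hy)
              · have key : DD Δ (ιU z * y)
                    = (ιU z ⊗ₜ[K] (1 : H)) * DD Δ y + ((1 : H) ⊗ₜ[K] ιU z) * DD Δ y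
                      + ιU z ⊗ₜ[K] y + y ⊗ₜ[K] ιU z := by
                  rw [DD_apply, DD_apply, map_mul, hΔ]
                  simp only [mul_sub, sub_mul, add_mul, mul_add,
                    Algebra.TensorProduct.tmul_mul_tmul, one_mul, mul_one]
                  abel
                rw [key]
                have h1 : ιU z ∈ V ^ (k + 1) := by
                  rw [pow_succ']
                  have := Submodule.mul_mem_mul (ι_mem_VV (K := K) z) (one_mem_VV_pow k)
                  rwa [mul_one] at this
                refine add_mem (add_mem (add_mem ?_ ?_) ?_) ?_
                · exact mulLeft_tmul_one_WT (ι_mem_VV z) (ih y hy)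
                · exact mulLeft_one_tmul_WT (ι_mem_VV z) (ih y hy)
                · exact tmul_mem_WT h1 hy
                · exact tmul_mem_WT hy h1
          | zero => rw [zero_mul, map_zero]; exact zero_mem _
          | add v w hv hw ihv ihw =>
              rw [add_mul, map_add]; exact add_mem ihv ihw
          | smul c v hv ihv =>
              rw [smul_mul_assoc, map_smul]; exact Submodule.smul_mem _ _ ihv

lemma Delta_mem (hΔ : ∀ x : L, Δ (ιU x) = (ιU x) ⊗ₜ[K] (1 : H) + (1 : H) ⊗ₜ[K] (ιU x)) (k : ℕ) : ∀ x ∈ V ^ k, Δ x ∈ WT (V ^ k) (V ^ k) := by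
  intro x hx
  have hΔx : Δ x = DD Δ x + x ⊗ₜ[K] 1 + 1 ⊗ₜ[K] x := by
    rw [DD_apply]; abel
  cases k with
  | zero =>
      rw [pow_zero] at hx ⊢
      rw [Submodule.mem_one] at hx
      obtain ⟨c, rfl⟩ := hx
      rw [AlgHom.commutes]
      have : algebraMap K (H ⊗[K] H) c = c • ((1 : H) ⊗ₜ[K] (1 : H)) := by
        rw [Algebra.algebraMap_eq_smul_one, Algebra.TensorProduct.one_def]
      rw [this]
      exact Submodule.smul_mem _ _ (tmul_mem_WT one_mem_one one_mem_one)
  | succ k =>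
      rw [hΔx]
      refine add_mem (add_mem ?_ ?_) ?_
      · exact WT_mono (VV_pow_le_succ k) (VV_pow_le_succ k) (DD_mem Δ hΔ k x hx)
      · exact tmul_mem_WT hx (one_mem_VV_pow (k + 1))
      · exact tmul_mem_WT (one_mem_VV_pow (k + 1)) hx


lemma alghom_ext_pointwise {A : Type*} [Ring A] [Algebra K A] (F G : H →ₐ[K] A)
    (h : ∀ z : L, F (ιU z) = G (ιU z)) (x : H) : F x = G x := by
  obtain ⟨t, rfl⟩ : ∃ t, UniversalEnvelopingAlgebra.mkAlgHom K L t = x :=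
    RingCon.mkₐ_surjective _ x
  induction t using TensorAlgebra.induction with
  | algebraMap r =>
      have hc : (UniversalEnvelopingAlgebra.mkAlgHom K L)
          (algebraMap K (TensorAlgebra K L) r) = algebraMap K H r := AlgHom.commutes _ r
      rw [hc, AlgHom.commutes, AlgHom.commutes]
  | ι z =>
      have : (UniversalEnvelopingAlgebra.mkAlgHom K L)
          (TensorAlgebra.ι K z) = ιU z := by
        rw [UniversalEnvelopingAlgebra.ι_apply]
      rw [this]; exact h z
  | mul a b ha hb => rw [map_mul, map_mul, map_mul, ha, hb]
  | add a b ha hb => rw [map_add, map_add, map_add, ha, hb]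

section Conv

local notation "E" => (UniversalEnvelopingAlgebra K L →ₗ[K] UniversalEnvelopingAlgebra K L)
local notation "CC" => (UniversalEnvelopingAlgebra K L →ₗ[K]
  (UniversalEnvelopingAlgebra K L →ₗ[K] UniversalEnvelopingAlgebra K L))

/-- `liftc f g : H ⊗ H →ₗ End H` sends `a ⊗ b` to `f a ∘ g b`. -/
noncomputable def liftc (f g : CC) : (H ⊗[K] H) →ₗ[K] E :=
  TensorProduct.lift ((LinearMap.llcomp K H H H).compl₁₂ f g)

lemma liftc_tmul (f g : CC) (a b : H) : liftc f g (a ⊗ₜ[K] b) = (f a) ∘ₗ (g b) := by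
  simp only [liftc, TensorProduct.lift.tmul, LinearMap.compl₁₂_apply]
  rfl

lemma liftc_add_left (f f' g : CC) : liftc (f + f') g = liftc f g + liftc f' g :=
  TensorProduct.ext' fun a b => by
    simp [liftc, LinearMap.add_comp]

lemma liftc_smul_left (c : K) (f g : CC) : liftc (c • f) g = c • liftc f g :=
  TensorProduct.ext' fun a b => by
    simp [liftc, LinearMap.smul_comp]

lemma liftc_add_right (f g g' : CC) : liftc f (g + g') = liftc f g + liftc f g' :=
  TensorProduct.ext' fun a b => by
    simp [liftc, LinearMap.comp_add]

lemma liftc_smul_right (c : K) (f g : CC) : liftc f (c • g) = c • liftc f g :=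
  TensorProduct.ext' fun a b => by
    simp [liftc, LinearMap.comp_smul]

/-- Convolution on `Hom(H, End H)`. -/
noncomputable def convL : CC →ₗ[K] CC →ₗ[K] CC :=
  LinearMap.mk₂ K (fun f g => (liftc f g) ∘ₗ Δ.toLinearMap)
    (fun f f' g => show liftc (f + f') g ∘ₗ Δ.toLinearMap
        = liftc f g ∘ₗ Δ.toLinearMap + liftc f' g ∘ₗ Δ.toLinearMap by
      rw [liftc_add_left, LinearMap.add_comp])
    (fun c f g => show liftc (c • f) g ∘ₗ Δ.toLinearMap = c • (liftc f g ∘ₗ Δ.toLinearMap) by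
      rw [liftc_smul_left, LinearMap.smul_comp])
    (fun f g g' => show liftc f (g + g') ∘ₗ Δ.toLinearMap
        = liftc f g ∘ₗ Δ.toLinearMap + liftc f g' ∘ₗ Δ.toLinearMap by
      rw [liftc_add_right, LinearMap.add_comp])
    (fun c f g => show liftc f (c • g) ∘ₗ Δ.toLinearMap = c • (liftc f g ∘ₗ Δ.toLinearMap) by
      rw [liftc_smul_right, LinearMap.smul_comp])

lemma convL_apply (f g : CC) (x : H) : convL Δ f g x = liftc f g (Δ x) := rfl

variable (ε : (UniversalEnvelopingAlgebra K L) →ₐ[K] K)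

/-- The convolution unit. -/
noncomputable def cunit : CC :=
  ε.toLinearMap.smulRight LinearMap.id

lemma cunit_apply (x : H) : cunit ε x = ε x • (LinearMap.id : E) := rfl

lemma counit_left
    (hΔ : ∀ x : L, Δ (ιU x) = (ιU x) ⊗ₜ[K] (1 : H) + (1 : H) ⊗ₜ[K] (ιU x))
    (hε : ∀ x : L, ε (ιU x) = 0) (x : H) :
    (Algebra.TensorProduct.lid K H) ((Algebra.TensorProduct.map ε (AlgHom.id K H)) (Δ x)) = x := by
  have h : ((Algebra.TensorProduct.lid K H : (K ⊗[K] H) ≃ₐ[K] H).toAlgHom.comp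
      ((Algebra.TensorProduct.map ε (AlgHom.id K H)).comp Δ)) = AlgHom.id K H := by
    refine AlgHom.ext (alghom_ext_pointwise _ _ fun z => ?_)
    show (Algebra.TensorProduct.lid K H)
        ((Algebra.TensorProduct.map ε (AlgHom.id K H)) (Δ (ιU z))) = ιU z
    rw [hΔ z]
    simp only [map_add, Algebra.TensorProduct.map_tmul, map_one, AlgHom.coe_id, id_eq,
      Algebra.TensorProduct.lid_tmul, Algebra.TensorProduct.rid_tmul, hε z, zero_smul,
      one_smul, zero_add, add_zero, smul_zero]
  exact AlgHom.congr_fun h x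

lemma counit_right
    (hΔ : ∀ x : L, Δ (ιU x) = (ιU x) ⊗ₜ[K] (1 : H) + (1 : H) ⊗ₜ[K] (ιU x))
    (hε : ∀ x : L, ε (ιU x) = 0) (x : H) :
    (Algebra.TensorProduct.rid K K H) ((Algebra.TensorProduct.map (AlgHom.id K H) ε) (Δ x)) = x := by
  have h : ((Algebra.TensorProduct.rid K K H : (H ⊗[K] K) ≃ₐ[K] H).toAlgHom.comp
      ((Algebra.TensorProduct.map (AlgHom.id K H) ε).comp Δ)) = AlgHom.id K H := by
    refine AlgHom.ext (alghom_ext_pointwise _ _ fun z => ?_)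
    show (Algebra.TensorProduct.rid K K H)
        ((Algebra.TensorProduct.map (AlgHom.id K H) ε) (Δ (ιU z))) = ιU z
    rw [hΔ z]
    simp only [map_add, Algebra.TensorProduct.map_tmul, map_one, AlgHom.coe_id, id_eq,
      Algebra.TensorProduct.lid_tmul, Algebra.TensorProduct.rid_tmul, hε z, zero_smul,
      one_smul, zero_add, add_zero, smul_zero]
  exact AlgHom.congr_fun h x

lemma conv_cunit_left
    (hΔ : ∀ x : L, Δ (ιU x) = (ιU x) ⊗ₜ[K] (1 : H) + (1 : H) ⊗ₜ[K] (ιU x))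
    (hε : ∀ x : L, ε (ιU x) = 0) (f : CC) :
    convL Δ (cunit ε) f = f := by
  have key : liftc (cunit ε) f = f ∘ₗ ((Algebra.TensorProduct.lid K H).toLinearMap
      ∘ₗ (Algebra.TensorProduct.map ε (AlgHom.id K H)).toLinearMap) :=
    TensorProduct.ext' fun a b => by
      rw [liftc_tmul]
      ext y
      simp [cunit_apply]
  refine LinearMap.ext fun x => ?_
  rw [convL_apply, key]
  simp only [LinearMap.comp_apply, AlgEquiv.toLinearMap_apply, AlgHom.toLinearMap_apply]
  rw [counit_left Δ ε hΔ hε x]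

lemma conv_cunit_right
    (hΔ : ∀ x : L, Δ (ιU x) = (ιU x) ⊗ₜ[K] (1 : H) + (1 : H) ⊗ₜ[K] (ιU x))
    (hε : ∀ x : L, ε (ιU x) = 0) (f : CC) :
    convL Δ f (cunit ε) = f := by
  have key : liftc f (cunit ε) = f ∘ₗ ((Algebra.TensorProduct.rid K K H).toLinearMap
      ∘ₗ (Algebra.TensorProduct.map (AlgHom.id K H) ε).toLinearMap) :=
    TensorProduct.ext' fun a b => by
      rw [liftc_tmul]
      ext y
      simp [cunit_apply]
  refine LinearMap.ext fun x => ?_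
  rw [convL_apply, key]
  simp only [LinearMap.comp_apply, AlgEquiv.toLinearMap_apply, AlgHom.toLinearMap_apply]
  rw [counit_right Δ ε hΔ hε x]


lemma coassoc_pointwise
    (hΔ : ∀ x : L, Δ (ιU x) = (ιU x) ⊗ₜ[K] (1 : H) + (1 : H) ⊗ₜ[K] (ιU x)) (x : H) :
    (Algebra.TensorProduct.assoc K K K H H H)
        ((Algebra.TensorProduct.map Δ (AlgHom.id K H)) (Δ x))
      = (Algebra.TensorProduct.map (AlgHom.id K H) Δ) (Δ x) := by
  refine alghom_ext_pointwise
    ((Algebra.TensorProduct.assoc K K K H H H :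
        ((H ⊗[K] H) ⊗[K] H) ≃ₐ[K] (H ⊗[K] (H ⊗[K] H))).toAlgHom.comp
      ((Algebra.TensorProduct.map Δ (AlgHom.id K H)).comp Δ))
    ((Algebra.TensorProduct.map (AlgHom.id K H) Δ).comp Δ) (fun z => ?_) x
  show (Algebra.TensorProduct.assoc K K K H H H)
      ((Algebra.TensorProduct.map Δ (AlgHom.id K H)) (Δ (ιU z)))
    = (Algebra.TensorProduct.map (AlgHom.id K H) Δ) (Δ (ιU z))
  rw [hΔ z]
  simp only [map_add, Algebra.TensorProduct.map_tmul, map_one, AlgHom.coe_id, id_eq,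
    Algebra.TensorProduct.assoc_tmul, hΔ z, Algebra.TensorProduct.one_def,
    TensorProduct.tmul_add, TensorProduct.add_tmul]
  abel

lemma conv_assoc
    (hΔ : ∀ x : L, Δ (ιU x) = (ιU x) ⊗ₜ[K] (1 : H) + (1 : H) ⊗ₜ[K] (ιU x)) (f g h : CC) :
    convL Δ (convL Δ f g) h = convL Δ f (convL Δ g h) := by
  have step1 : liftc (convL Δ f g) h
      = (TensorProduct.lift ((LinearMap.llcomp K H H H).compl₁₂ (liftc f g) h))
        ∘ₗ (Algebra.TensorProduct.map Δ (AlgHom.id K H)).toLinearMap :=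
    TensorProduct.ext' fun a b => by
      simp only [liftc, LinearMap.comp_apply, AlgHom.toLinearMap_apply,
        Algebra.TensorProduct.map_tmul, TensorProduct.lift.tmul, LinearMap.compl₁₂_apply,
        AlgHom.coe_id, id_eq]
      rfl
  have step3 : liftc f (convL Δ g h)
      = (TensorProduct.lift ((LinearMap.llcomp K H H H).compl₁₂ f (liftc g h)))
        ∘ₗ (Algebra.TensorProduct.map (AlgHom.id K H) Δ).toLinearMap :=
    TensorProduct.ext' fun a b => by
      simp only [liftc, LinearMap.comp_apply, AlgHom.toLinearMap_apply,
        Algebra.TensorProduct.map_tmul, TensorProduct.lift.tmul, LinearMap.compl₁₂_apply,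
        AlgHom.coe_id, id_eq]
      rfl
  have step2 : TensorProduct.lift ((LinearMap.llcomp K H H H).compl₁₂ (liftc f g) h)
      = (TensorProduct.lift ((LinearMap.llcomp K H H H).compl₁₂ f (liftc g h)))
        ∘ₗ (Algebra.TensorProduct.assoc K K K H H H).toLinearMap := by
    apply TensorProduct.ext_threefold
    intro a b c
    simp only [LinearMap.comp_apply, AlgEquiv.toLinearMap_apply,
      Algebra.TensorProduct.assoc_tmul, TensorProduct.lift.tmul, LinearMap.compl₁₂_apply,
      liftc_tmul, LinearMap.llcomp_apply']
    rw [LinearMap.comp_assoc]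
  refine LinearMap.ext fun x => ?_
  rw [convL_apply, convL_apply, step1, step3, step2]
  simp only [LinearMap.comp_apply, AlgHom.toLinearMap_apply, AlgEquiv.toLinearMap_apply]
  rw [coassoc_pointwise Δ hΔ x]


variable (B : (UniversalEnvelopingAlgebra K L) →ₗ[K]
  ((UniversalEnvelopingAlgebra K L) →ₗ[K] (UniversalEnvelopingAlgebra K L)))

/-- Convolution powers of `γ - e`. -/
noncomputable def pp (ε : (UniversalEnvelopingAlgebra K L) →ₐ[K] K) : ℕ → CC
  | 0 => cunit ε
  | n + 1 => convL Δ (B.flip - cunit ε) (pp ε n)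

/-- `f` vanishes on the filtration below level `n`. -/
def Van (n : ℕ) (f : CC) : Prop := ∀ k, k < n → ∀ x ∈ (VV : Submodule K H) ^ k, f x = 0

lemma liftc_vanish (f g : CC) {p q : Submodule K H} {t : H ⊗[K] H} (ht : t ∈ WT p q)
    (h : ∀ a ∈ p, ∀ b ∈ q, (f a) ∘ₗ (g b) = 0) : liftc f g t = 0 := by
  have hle : WT p q ≤ LinearMap.ker (liftc f g) := Submodule.map₂_le.mpr fun a ha b hb => by
    rw [LinearMap.mem_ker, TensorProduct.mk_apply, liftc_tmul]
    exact h a ha b hb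
  exact LinearMap.mem_ker.mp (hle ht)

lemma convL_decomp (f g : CC) (x : H) :
    convL Δ f g x = liftc f g (DD Δ x) + (f x) ∘ₗ (g 1) + (f 1) ∘ₗ (g x) := by
  have hx : Δ x = DD Δ x + x ⊗ₜ[K] 1 + 1 ⊗ₜ[K] x := by rw [DD_apply]; abel
  rw [convL_apply]
  show liftc f g (Δ x) = _
  rw [hx, map_add, map_add, liftc_tmul, liftc_tmul]

lemma van_lam (hone : ∀ f : H, B f 1 = f) :
    ∀ x ∈ ((VV : Submodule K H) ^ 0), (B.flip - cunit ε) x = 0 := by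
  intro x hx
  rw [pow_zero, Submodule.mem_one] at hx
  obtain ⟨c, rfl⟩ := hx
  have hflip : B.flip (1 : H) = LinearMap.id := LinearMap.ext fun y => hone y
  rw [LinearMap.sub_apply, Algebra.algebraMap_eq_smul_one, map_smul, map_smul, hflip,
    cunit_apply, map_one, one_smul]
  exact sub_self _

lemma van_conv
    (hΔ : ∀ x : L, Δ (ιU x) = (ιU x) ⊗ₜ[K] (1 : H) + (1 : H) ⊗ₜ[K] (ιU x))
    (g f : CC) (hg : ∀ x ∈ ((VV : Submodule K H) ^ 0), g x = 0)
    {n : ℕ} (hn : 1 ≤ n) (hf : Van n f) : Van (n + 1) (convL Δ g f) := by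
  have h1mem : (1 : H) ∈ ((VV : Submodule K H) ^ 0) := by
    rw [pow_zero]; exact one_mem_one
  have hg1 : g 1 = 0 := hg 1 h1mem
  have hf1 : f 1 = 0 := hf 0 hn 1 h1mem
  intro k hk x hx
  cases k with
  | zero =>
      rw [pow_zero, Submodule.mem_one] at hx
      obtain ⟨c, rfl⟩ := hx
      rw [convL_apply]
      show liftc g f (Δ (algebraMap K H c)) = 0
      rw [AlgHom.commutes]
      have hc : algebraMap K (H ⊗[K] H) c = c • ((1 : H) ⊗ₜ[K] (1 : H)) := by
        rw [Algebra.algebraMap_eq_smul_one, Algebra.TensorProduct.one_def]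
      rw [hc, map_smul, liftc_tmul, hg1, LinearMap.zero_comp, smul_zero]
  | succ k =>
      rw [convL_decomp, hg1, hf1, LinearMap.comp_zero, LinearMap.zero_comp, add_zero, add_zero]
      refine liftc_vanish g f (DD_mem Δ hΔ k x hx) fun a _ b hb => ?_
      rw [hf k (by omega) b hb, LinearMap.comp_zero]

lemma pp_one
    (hΔ : ∀ x : L, Δ (ιU x) = (ιU x) ⊗ₜ[K] (1 : H) + (1 : H) ⊗ₜ[K] (ιU x))
    (hε : ∀ x : L, ε (ιU x) = 0) :
    pp Δ B ε 1 = B.flip - cunit ε := by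
  show convL Δ (B.flip - cunit ε) (cunit ε) = B.flip - cunit ε
  exact conv_cunit_right Δ ε hΔ hε _

lemma van_pp
    (hΔ : ∀ x : L, Δ (ιU x) = (ιU x) ⊗ₜ[K] (1 : H) + (1 : H) ⊗ₜ[K] (ιU x))
    (hε : ∀ x : L, ε (ιU x) = 0) (hone : ∀ f : H, B f 1 = f) :
    ∀ n, Van (n + 1) (pp Δ B ε (n + 1)) := by
  intro n
  induction n with
  | zero =>
      intro k hk x hx
      interval_cases k
      rw [pp_one Δ ε B hΔ hε]
      exact van_lam ε B hone x hx
  | succ n ih =>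
      exact van_conv Δ hΔ _ _ (van_lam ε B hone) (Nat.le_add_left 1 n) ih

lemma conv_pp_lam
    (hΔ : ∀ x : L, Δ (ιU x) = (ιU x) ⊗ₜ[K] (1 : H) + (1 : H) ⊗ₜ[K] (ιU x))
    (hε : ∀ x : L, ε (ιU x) = 0) :
    ∀ n, convL Δ (pp Δ B ε n) (B.flip - cunit ε) = pp Δ B ε (n + 1) := by
  intro n
  induction n with
  | zero =>
      show convL Δ (cunit ε) (B.flip - cunit ε) = pp Δ B ε 1
      rw [conv_cunit_left Δ ε hΔ hε, pp_one Δ ε B hΔ hε]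
  | succ n ih =>
      show convL Δ (convL Δ (B.flip - cunit ε) (pp Δ B ε n)) (B.flip - cunit ε) = _
      rw [conv_assoc Δ hΔ, ih]
      rfl

/-- Partial geometric series. -/
noncomputable def βsum (N : ℕ) : CC :=
  ∑ n ∈ Finset.range (N + 1), ((-1 : K) ^ n) • pp Δ B ε n

lemma βsum_succ (N : ℕ) :
    βsum Δ ε B (N + 1) = βsum Δ ε B N + ((-1 : K) ^ (N + 1)) • pp Δ B ε (N + 1) := by
  rw [βsum, Finset.sum_range_succ]
  rfl

lemma tele_left
    (hΔ : ∀ x : L, Δ (ιU x) = (ιU x) ⊗ₜ[K] (1 : H) + (1 : H) ⊗ₜ[K] (ιU x))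
    (hε : ∀ x : L, ε (ιU x) = 0) (N : ℕ) :
    convL Δ B.flip (βsum Δ ε B N)
      = cunit ε - ((-1 : K) ^ (N + 1)) • pp Δ B ε (N + 1) := by
  have hsplit : (B.flip : CC) = cunit ε + (B.flip - cunit ε) := by abel
  rw [hsplit, map_add, LinearMap.add_apply]
  rw [conv_cunit_left Δ ε hΔ hε]
  have h2 : convL Δ (B.flip - cunit ε) (βsum Δ ε B N)
      = ∑ n ∈ Finset.range (N + 1), ((-1 : K) ^ n) • pp Δ B ε (n + 1) := by
    rw [βsum, map_sum]
    exact Finset.sum_congr rfl fun n _ => by rw [map_smul]; rfl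
  rw [h2, βsum]
  have key : ∑ n ∈ Finset.range (N + 1),
        (((-1 : K) ^ n) • pp Δ B ε n - ((-1 : K) ^ (n + 1)) • pp Δ B ε (n + 1))
      = ((-1 : K) ^ 0) • pp Δ B ε 0 - ((-1 : K) ^ (N + 1)) • pp Δ B ε (N + 1) :=
    Finset.sum_range_sub' (fun n => ((-1 : K) ^ n) • pp Δ B ε n) (N + 1)
  calc ∑ n ∈ Finset.range (N + 1), ((-1 : K) ^ n) • pp Δ B ε n
        + ∑ n ∈ Finset.range (N + 1), ((-1 : K) ^ n) • pp Δ B ε (n + 1)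
      = ∑ n ∈ Finset.range (N + 1),
          (((-1 : K) ^ n) • pp Δ B ε n - ((-1 : K) ^ (n + 1)) • pp Δ B ε (n + 1)) := by
        rw [← Finset.sum_add_distrib]
        refine Finset.sum_congr rfl fun n _ => ?_
        module
    _ = cunit ε - ((-1 : K) ^ (N + 1)) • pp Δ B ε (N + 1) := by
        have h0 : pp Δ B ε 0 = cunit ε := rfl
        rw [key, pow_zero, one_smul, h0]

lemma tele_right
    (hΔ : ∀ x : L, Δ (ιU x) = (ιU x) ⊗ₜ[K] (1 : H) + (1 : H) ⊗ₜ[K] (ιU x))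
    (hε : ∀ x : L, ε (ιU x) = 0) (N : ℕ) :
    convL Δ (βsum Δ ε B N) B.flip
      = cunit ε - ((-1 : K) ^ (N + 1)) • pp Δ B ε (N + 1) := by
  have hsplit : (B.flip : CC) = cunit ε + (B.flip - cunit ε) := by abel
  rw [hsplit, map_add]
  rw [conv_cunit_right Δ ε hΔ hε]
  have h2 : convL Δ (βsum Δ ε B N) (B.flip - cunit ε)
      = ∑ n ∈ Finset.range (N + 1), ((-1 : K) ^ n) • pp Δ B ε (n + 1) := by
    rw [βsum]
    have : convL Δ (∑ n ∈ Finset.range (N + 1), ((-1 : K) ^ n) • pp Δ B ε n)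
        = ∑ n ∈ Finset.range (N + 1), ((-1 : K) ^ n) • convL Δ (pp Δ B ε n) := by
      rw [map_sum]
      exact Finset.sum_congr rfl fun n _ => by rw [map_smul]
    rw [this, LinearMap.sum_apply]
    refine Finset.sum_congr rfl fun n _ => ?_
    rw [LinearMap.smul_apply, conv_pp_lam Δ ε B hΔ hε n]
  rw [h2, βsum]
  have key : ∑ n ∈ Finset.range (N + 1),
        (((-1 : K) ^ n) • pp Δ B ε n - ((-1 : K) ^ (n + 1)) • pp Δ B ε (n + 1))
      = ((-1 : K) ^ 0) • pp Δ B ε 0 - ((-1 : K) ^ (N + 1)) • pp Δ B ε (N + 1) :=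
    Finset.sum_range_sub' (fun n => ((-1 : K) ^ n) • pp Δ B ε n) (N + 1)
  calc ∑ n ∈ Finset.range (N + 1), ((-1 : K) ^ n) • pp Δ B ε n
        + ∑ n ∈ Finset.range (N + 1), ((-1 : K) ^ n) • pp Δ B ε (n + 1)
      = ∑ n ∈ Finset.range (N + 1),
          (((-1 : K) ^ n) • pp Δ B ε n - ((-1 : K) ^ (n + 1)) • pp Δ B ε (n + 1)) := by
        rw [← Finset.sum_add_distrib]
        refine Finset.sum_congr rfl fun n _ => ?_
        module
    _ = cunit ε - ((-1 : K) ^ (N + 1)) • pp Δ B ε (N + 1) := by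
        have h0 : pp Δ B ε 0 = cunit ε := rfl
        rw [key, pow_zero, one_smul, h0]


noncomputable def deg (x : H) : ℕ := (exists_mem_VV_pow x).choose

lemma deg_spec (x : H) : x ∈ (VV : Submodule K H) ^ (deg x) :=
  (exists_mem_VV_pow x).choose_spec

lemma βsum_stab
    (hΔ : ∀ x : L, Δ (ιU x) = (ιU x) ⊗ₜ[K] (1 : H) + (1 : H) ⊗ₜ[K] (ιU x))
    (hε : ∀ x : L, ε (ιU x) = 0) (hone : ∀ f : H, B f 1 = f)
    {x : H} {a b : ℕ} (hxa : x ∈ (VV : Submodule K H) ^ a)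
    (hxb : x ∈ (VV : Submodule K H) ^ b) :
    βsum Δ ε B a x = βsum Δ ε B b x := by
  have haux : ∀ c d : ℕ, c ≤ d → x ∈ (VV : Submodule K H) ^ c →
      βsum Δ ε B d x = βsum Δ ε B c x := by
    intro c d hcd hc
    induction d, hcd using Nat.le_induction with
    | base => rfl
    | succ d hd ih =>
        rw [βsum_succ, LinearMap.add_apply, LinearMap.smul_apply,
          van_pp Δ ε B hΔ hε hone d c (by omega) x hc, smul_zero, add_zero, ih]
  rcases le_total a b with h | h
  · rw [haux a b h hxa]
  · rw [haux b a h hxb]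

noncomputable def βmap
    (hΔ : ∀ x : L, Δ (ιU x) = (ιU x) ⊗ₜ[K] (1 : H) + (1 : H) ⊗ₜ[K] (ιU x))
    (hε : ∀ x : L, ε (ιU x) = 0) (hone : ∀ f : H, B f 1 = f) : CC :=
  { toFun := fun x => βsum Δ ε B (deg x) x
    map_add' := fun x y => by
      show βsum Δ ε B (deg (x + y)) (x + y) = βsum Δ ε B (deg x) x + βsum Δ ε B (deg y) y
      have h1 : x ∈ (VV : Submodule K H) ^ max (deg x) (deg y) :=
        VV_pow_mono (le_max_left _ _) (deg_spec x)
      have h2 : y ∈ (VV : Submodule K H) ^ max (deg x) (deg y) :=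
        VV_pow_mono (le_max_right _ _) (deg_spec y)
      have hxy : x + y ∈ (VV : Submodule K H) ^ max (deg x) (deg y) := add_mem h1 h2
      rw [βsum_stab Δ ε B hΔ hε hone (deg_spec (x + y)) hxy, map_add,
        βsum_stab Δ ε B hΔ hε hone h1 (deg_spec x),
        βsum_stab Δ ε B hΔ hε hone h2 (deg_spec y)]
    map_smul' := fun c x => by
      show βsum Δ ε B (deg (c • x)) (c • x) = (RingHom.id K) c • βsum Δ ε B (deg x) x
      have h : c • x ∈ (VV : Submodule K H) ^ (deg x) :=
        Submodule.smul_mem _ _ (deg_spec x)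
      rw [βsum_stab Δ ε B hΔ hε hone (deg_spec (c • x)) h, map_smul]
      rfl }

lemma βmap_apply_of_mem
    (hΔ : ∀ x : L, Δ (ιU x) = (ιU x) ⊗ₜ[K] (1 : H) + (1 : H) ⊗ₜ[K] (ιU x))
    (hε : ∀ x : L, ε (ιU x) = 0) (hone : ∀ f : H, B f 1 = f)
    {x : H} {k : ℕ} (hx : x ∈ (VV : Submodule K H) ^ k) :
    βmap Δ ε B hΔ hε hone x = βsum Δ ε B k x :=
  βsum_stab Δ ε B hΔ hε hone (deg_spec x) hx

lemma main_left
    (hΔ : ∀ x : L, Δ (ιU x) = (ιU x) ⊗ₜ[K] (1 : H) + (1 : H) ⊗ₜ[K] (ιU x))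
    (hε : ∀ x : L, ε (ιU x) = 0) (hone : ∀ f : H, B f 1 = f) (x : H) :
    convL Δ B.flip (βmap Δ ε B hΔ hε hone) x = ε x • (LinearMap.id : E) := by
  obtain ⟨k, hk⟩ := exists_mem_VV_pow x
  set βm := βmap Δ ε B hΔ hε hone with hβm
  have hdecomp : convL Δ B.flip βm
      = convL Δ B.flip (βsum Δ ε B k) + convL Δ B.flip (βm - βsum Δ ε B k) := by
    rw [← map_add]
    congr 1
    abel
  rw [hdecomp, LinearMap.add_apply]
  have h0 : convL Δ B.flip (βm - βsum Δ ε B k) x = 0 := by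
    rw [convL_apply]
    refine liftc_vanish _ _ (Delta_mem Δ hΔ k x hk) fun a _ b hb => ?_
    have hb0 : (βm - βsum Δ ε B k) b = 0 := by
      rw [LinearMap.sub_apply, hβm, βmap_apply_of_mem Δ ε B hΔ hε hone hb, sub_self]
    rw [hb0, LinearMap.comp_zero]
  rw [h0, add_zero, tele_left Δ ε B hΔ hε k, LinearMap.sub_apply, LinearMap.smul_apply,
    van_pp Δ ε B hΔ hε hone k k (lt_add_one k) x hk, smul_zero, sub_zero, cunit_apply]

lemma main_right
    (hΔ : ∀ x : L, Δ (ιU x) = (ιU x) ⊗ₜ[K] (1 : H) + (1 : H) ⊗ₜ[K] (ιU x))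
    (hε : ∀ x : L, ε (ιU x) = 0) (hone : ∀ f : H, B f 1 = f) (x : H) :
    convL Δ (βmap Δ ε B hΔ hε hone) B.flip x = ε x • (LinearMap.id : E) := by
  obtain ⟨k, hk⟩ := exists_mem_VV_pow x
  set βm := βmap Δ ε B hΔ hε hone with hβm
  have hdecomp : convL Δ βm B.flip
      = convL Δ (βsum Δ ε B k) B.flip + convL Δ (βm - βsum Δ ε B k) B.flip := by
    rw [← LinearMap.add_apply, ← map_add]
    congr 2
    abel
  rw [hdecomp, LinearMap.add_apply]
  have h0 : convL Δ (βm - βsum Δ ε B k) B.flip x = 0 := by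
    rw [convL_apply]
    refine liftc_vanish _ _ (Delta_mem Δ hΔ k x hk) fun a ha b _ => ?_
    have ha0 : (βm - βsum Δ ε B k) a = 0 := by
      rw [LinearMap.sub_apply, hβm, βmap_apply_of_mem Δ ε B hΔ hε hone ha, sub_self]
    rw [ha0, LinearMap.zero_comp]
  rw [h0, add_zero, tele_right Δ ε B hΔ hε k, LinearMap.sub_apply, LinearMap.smul_apply,
    van_pp Δ ε B hΔ hε hone k k (lt_add_one k) x hk, smul_zero, sub_zero, cunit_apply]

end Conv

end St10


/-- `(L, ⁅·,·⁆, m)` is a right Post-Lie algebra. -/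
def IsRightPostLie (K : Type*) {L : Type*} [Field K] [LieRing L] [LieAlgebra K L]
    (m : L →ₗ[K] L →ₗ[K] L) : Prop :=
  (∀ x y z : L, m x ⁅y, z⁆
      = (m (m x y) z - m x (m y z)) - (m (m x z) y - m x (m z y)))
  ∧ (∀ x y z : L, m ⁅x, y⁆ z = ⁅m x z, y⁆ + ⁅x, m y z⁆)

/-- For a right Post-Lie algebra `(L, ⁅·,·⁆, m)`, the extension `B` of
`m` to `U(L)` turns `(U(L), B)` into a right Post-Hopf algebra; in particular the right
multiplication `γ(z)(y) = y * z` is convolution invertible. -/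
theorem statement10 {K L : Type*} [Field K] [CharZero K] [LieRing L] [LieAlgebra K L]
    (m : L →ₗ[K] L →ₗ[K] L) (hm : IsRightPostLie K m)
    (Δ : UniversalEnvelopingAlgebra K L →ₐ[K]
          UniversalEnvelopingAlgebra K L ⊗[K] UniversalEnvelopingAlgebra K L)
    (hΔ : ∀ x : L, Δ (UniversalEnvelopingAlgebra.ι K x)
        = UniversalEnvelopingAlgebra.ι K x ⊗ₜ[K] (1 : UniversalEnvelopingAlgebra K L)
          + (1 : UniversalEnvelopingAlgebra K L) ⊗ₜ[K] UniversalEnvelopingAlgebra.ι K x)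
    (ε : UniversalEnvelopingAlgebra K L →ₐ[K] K)
    (hε : ∀ x : L, ε (UniversalEnvelopingAlgebra.ι K x) = 0)
    (B : UniversalEnvelopingAlgebra K L →ₗ[K]
          UniversalEnvelopingAlgebra K L →ₗ[K] UniversalEnvelopingAlgebra K L)
    (hagree : ∀ x y : L,
      B (UniversalEnvelopingAlgebra.ι K x) (UniversalEnvelopingAlgebra.ι K y)
        = UniversalEnvelopingAlgebra.ι K (m x y))
    (hcounit : ∀ f g, ε (B f g) = ε f * ε g)
    (hcomul : ∀ f g, Δ (B f g) = TensorProduct.map₂ B B (Δ f) (Δ g))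
    (hone : ∀ f, B f 1 = f)
    (hone' : ∀ f, B 1 f = ε f • (1 : UniversalEnvelopingAlgebra K L))
    (hword : ∀ f g (y : L), B f (g * UniversalEnvelopingAlgebra.ι K y)
        = B (B f g) (UniversalEnvelopingAlgebra.ι K y)
          - B f (B g (UniversalEnvelopingAlgebra.ι K y)))
    (hmul : ∀ f g h, B (f * g) h
        = TensorProduct.lift
            ((LinearMap.mul K (UniversalEnvelopingAlgebra K L)).compl₁₂ (B f) (B g))
            (Δ h))
    (hBB : ∀ f g h, B (B f g) h
        = B f (TensorProduct.lift
            ((LinearMap.mul K (UniversalEnvelopingAlgebra K L)).compl₁₂ (B g) LinearMap.id)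
            (Δ h))) :
    ∃ β : UniversalEnvelopingAlgebra K L →ₗ[K]
            UniversalEnvelopingAlgebra K L →ₗ[K] UniversalEnvelopingAlgebra K L,
      ∀ x : UniversalEnvelopingAlgebra K L,
        TensorProduct.lift
            ((LinearMap.llcomp K (UniversalEnvelopingAlgebra K L)
                (UniversalEnvelopingAlgebra K L)
                (UniversalEnvelopingAlgebra K L)).compl₁₂ B.flip β) (Δ x)
            = ε x • (LinearMap.id :
                UniversalEnvelopingAlgebra K L →ₗ[K] UniversalEnvelopingAlgebra K L)
        ∧ TensorProduct.lift
            ((LinearMap.llcomp K (UniversalEnvelopingAlgebra K L)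
                (UniversalEnvelopingAlgebra K L)
                (UniversalEnvelopingAlgebra K L)).compl₁₂ β B.flip) (Δ x)
            = ε x • (LinearMap.id :
                UniversalEnvelopingAlgebra K L →ₗ[K] UniversalEnvelopingAlgebra K L) := by
  refine ⟨St10.βmap Δ ε B hΔ hε hone, fun x => ⟨?_, ?_⟩⟩
  · exact St10.main_left Δ ε B hΔ hε hone x
  · exact St10.main_right Δ ε B hΔ hε hone x
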